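/- Let r, s ≥ 1 be coprime integers. Then the rational function ∏_{j=1}^{s−1} (1 − t^{r+s−j}) / ∏_{j=1}^{s−1} (1 − t^{j+1}) is a polynomial in t with integer coefficients. -/

import Mathlib

open Polynomial Finset

private lemma countIoc (d m n : ℕ) (hmn : m ≤ n) :
    ((Finset.Ioc m n).filter (d ∣ ·)).card = n / d - m / d := by
  have h : (Finset.Ioc 0 m ∪ Finset.Ioc m n) = Finset.Ioc 0 n :=
    Finset.Ioc_union_Ioc_eq_Ioc (Nat.zero_le m) hmn
  have hdisj : Disjoint ((Finset.Ioc 0 m).filter (d ∣ ·)) ((Finset.Ioc m n).filter (d ∣ ·)) :=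
    ((Finset.disjoint_left).mpr (by intro x hx hx'; simp only [mem_Ioc] at hx hx'; omega)).mono
      (filter_subset _ _) (filter_subset _ _)
  have h2 := Nat.Ioc_filter_dvd_card_eq_div n d
  rw [← h, Finset.filter_union, Finset.card_union_of_disjoint hdisj,
    Nat.Ioc_filter_dvd_card_eq_div] at h2
  omega

private lemma prodXPowSubOne (N : ℕ) (A : Finset ℕ) (hA : A ⊆ Finset.Icc 1 N) :
    ∏ k ∈ A, ((X : Polynomial ℤ) ^ k - 1) =
      ∏ d ∈ Finset.Icc 1 N, (cyclotomic d ℤ) ^ ((A.filter (d ∣ ·)).card) := by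
  have key : ∀ k ∈ A, (X : Polynomial ℤ) ^ k - 1 =
      ∏ d ∈ Finset.Icc 1 N, if d ∣ k then cyclotomic d ℤ else 1 := by
    intro k hk
    have hk' := hA hk
    simp only [mem_Icc] at hk'
    rw [← Finset.prod_filter]
    have hdiv : (Finset.Icc 1 N).filter (· ∣ k) = k.divisors := by
      ext d
      simp only [mem_filter, mem_Icc, Nat.mem_divisors]
      constructor
      · rintro ⟨⟨h1, h2⟩, h3⟩; exact ⟨h3, by omega⟩
      · rintro ⟨h1, h2⟩
        have hd1 : 1 ≤ d := Nat.pos_of_dvd_of_pos h1 (by omega)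
        have hdk : d ≤ k := Nat.le_of_dvd (by omega) h1
        exact ⟨⟨hd1, by omega⟩, h1⟩
    rw [hdiv, Polynomial.prod_cyclotomic_eq_X_pow_sub_one (by omega)]
  rw [Finset.prod_congr rfl key, Finset.prod_comm]
  refine Finset.prod_congr rfl fun d _ => ?_
  rw [← Finset.prod_filter, Finset.prod_const]

/-- For coprime `r, s ≥ 1`, the rational-slope `t`-Catalan number
`∏_{j=1}^{s−1}(1 − t^{r+s−j}) / ∏_{j=1}^{s−1}(1 − t^{j+1})` is a polynomial with
integer coefficients: the denominator divides the numerator in `ℤ[t]`. -/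
theorem stmt14 (r s : ℕ) (hr : 1 ≤ r) (hs : 1 ≤ s) (hco : Nat.Coprime r s) :
    ∃ p : Polynomial ℤ,
      (∏ j ∈ Finset.Icc 1 (s - 1), (1 - (Polynomial.X : Polynomial ℤ) ^ (r + s - j))) =
        p * ∏ j ∈ Finset.Icc 1 (s - 1), (1 - (Polynomial.X : Polynomial ℤ) ^ (j + 1)) := by
  -- reindexed products
  have hB : ∏ j ∈ Finset.Icc 1 (s-1), ((X : Polynomial ℤ)^(j+1) - 1) =
      ∏ k ∈ Finset.Ioc 1 s, ((X : Polynomial ℤ)^k - 1) := by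
    refine Finset.prod_nbij' (fun j => j+1) (fun k => k-1) ?_ ?_ ?_ ?_ ?_
    · intro a ha; simp only [mem_Icc] at ha; simp only [mem_Ioc]; omega
    · intro a ha; simp only [mem_Ioc] at ha; simp only [mem_Icc]; omega
    · intro a ha; simp only [mem_Icc] at ha; omega
    · intro a ha; simp only [mem_Ioc] at ha; omega
    · intro a _; rfl
  have hA : ∏ j ∈ Finset.Icc 1 (s-1), ((X : Polynomial ℤ)^(r+s-j) - 1) =
      ∏ k ∈ Finset.Ioc r (r+s-1), ((X : Polynomial ℤ)^k - 1) := by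
    refine Finset.prod_nbij' (fun j => r+s-j) (fun k => r+s-k) ?_ ?_ ?_ ?_ ?_
    · intro a ha; simp only [mem_Icc] at ha; simp only [mem_Ioc]; omega
    · intro a ha; simp only [mem_Ioc] at ha; simp only [mem_Icc]; omega
    · intro a ha; simp only [mem_Icc] at ha; omega
    · intro a ha; simp only [mem_Ioc] at ha; omega
    · intro a _; rfl
  set N := r + s - 1 with hN
  have hBsub : Finset.Ioc 1 s ⊆ Finset.Icc 1 N := by
    intro k hk; simp only [mem_Ioc] at hk; simp only [mem_Icc]; omega
  have hAsub : Finset.Ioc r (r+s-1) ⊆ Finset.Icc 1 N := by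
    intro k hk; simp only [mem_Ioc] at hk; simp only [mem_Icc]; omega
  -- counting inequality
  have key : ∀ d ∈ Finset.Icc 1 N,
      (((Finset.Ioc 1 s).filter (d ∣ ·)).card : ℕ) ≤
        ((Finset.Ioc r (r+s-1)).filter (d ∣ ·)).card := by
    intro d hd
    simp only [mem_Icc] at hd
    rw [countIoc d 1 s hs, countIoc d r (r+s-1) (by omega)]
    rcases Nat.lt_or_ge d 2 with h2 | h2
    · -- d = 1
      have hd1 : d = 1 := by omega
      subst hd1
      simp only [Nat.div_one]
      omega
    · have h1d : 1 / d = 0 := Nat.div_eq_of_lt h2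
      have hmain : r / d + s / d ≤ (r + s - 1) / d := by
        by_cases hds : d ∣ s
        · have hdr : ¬ d ∣ r := by
            intro hdr
            have : d ∣ Nat.gcd r s := Nat.dvd_gcd hdr hds
            rw [hco] at this
            have := Nat.le_of_dvd one_pos this
            omega
          have hr1 : r / d = (r - 1) / d := by
            have := @Nat.succ_div (r - 1) d
            have hrr : r - 1 + 1 = r := by omega
            rw [hrr] at this
            rw [this, if_neg hdr, Nat.add_zero]
          obtain ⟨m, hm⟩ := hds
          have : (r - 1 + d * m) / d = (r - 1) / d + m :=
            Nat.add_mul_div_left _ _ (by omega)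
          have hrs : r + s - 1 = r - 1 + d * m := by omega
          have hsd : s / d = m := by rw [hm]; exact Nat.mul_div_cancel_left m (by omega)
          rw [hrs, this, hr1, hsd]
        · have hs1 : s / d = (s - 1) / d := by
            have := @Nat.succ_div (s - 1) d
            have hss : s - 1 + 1 = s := by omega
            rw [hss] at this
            rw [this, if_neg hds, Nat.add_zero]
          have := Nat.add_div_le_add_div r (s - 1) d
          have hrs : r + (s - 1) = r + s - 1 := by omega
          rw [hrs] at this
          omega
      have hmono : r / d ≤ (r + s - 1) / d := Nat.div_le_div_right (by omega)
      omega
  -- divisibility chain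
  have hdvd : (∏ j ∈ Finset.Icc 1 (s-1), (1 - (X : Polynomial ℤ) ^ (j+1))) ∣
      ∏ j ∈ Finset.Icc 1 (s-1), (1 - (X : Polynomial ℤ) ^ (r+s-j)) := by
    have d1 : (∏ j ∈ Finset.Icc 1 (s-1), (1 - (X : Polynomial ℤ) ^ (j+1))) ∣
        ∏ j ∈ Finset.Icc 1 (s-1), ((X : Polynomial ℤ)^(j+1) - 1) :=
      Finset.prod_dvd_prod_of_dvd _ _ (fun j _ => ⟨-1, by ring⟩)
    have d2 : (∏ k ∈ Finset.Ioc 1 s, ((X : Polynomial ℤ)^k - 1)) ∣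
        ∏ k ∈ Finset.Ioc r (r+s-1), ((X : Polynomial ℤ)^k - 1) := by
      rw [prodXPowSubOne N _ hBsub, prodXPowSubOne N _ hAsub]
      exact Finset.prod_dvd_prod_of_dvd _ _ (fun d hd => pow_dvd_pow _ (key d hd))
    have d3 : (∏ j ∈ Finset.Icc 1 (s-1), ((X : Polynomial ℤ)^(r+s-j) - 1)) ∣
        ∏ j ∈ Finset.Icc 1 (s-1), (1 - (X : Polynomial ℤ) ^ (r+s-j)) :=
      Finset.prod_dvd_prod_of_dvd _ _ (fun j _ => ⟨-1, by ring⟩)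
    calc (∏ j ∈ Finset.Icc 1 (s-1), (1 - (X : Polynomial ℤ) ^ (j+1)))
        ∣ ∏ j ∈ Finset.Icc 1 (s-1), ((X : Polynomial ℤ)^(j+1) - 1) := d1
      _ = ∏ k ∈ Finset.Ioc 1 s, ((X : Polynomial ℤ)^k - 1) := hB
      _ ∣ ∏ k ∈ Finset.Ioc r (r+s-1), ((X : Polynomial ℤ)^k - 1) := d2
      _ = ∏ j ∈ Finset.Icc 1 (s-1), ((X : Polynomial ℤ)^(r+s-j) - 1) := hA.symm
      _ ∣ ∏ j ∈ Finset.Icc 1 (s-1), (1 - (X : Polynomial ℤ) ^ (r+s-j)) := d3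
  obtain ⟨p, hp⟩ := hdvd
  exact ⟨p, by rw [hp, mul_comm]⟩
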